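/- For n ≥ 2, the number of Dyck n-paths whose terminal descent has even length and all of whose other descents to ground level (if any) have odd length equals the Catalan number C_{n-1}. -/

import Mathlib

inductive Step : Type
  | U : Step
  | D : Step
deriving DecidableEq

open Step

/-- The path stays weakly above ground level: every prefix has at least as many `U`s as `D`s. -/
def NonnegPrefixes (p : List Step) : Prop :=
  ∀ q : List Step, q <+: p → q.count D ≤ q.count U

/-- A Dyck path: equally many upsteps and downsteps, never dipping below ground level. -/
def IsDyck (p : List Step) : Prop :=
  p.count U = p.count D ∧ NonnegPrefixes p

/-- A Dyck `n`-path: a Dyck path with `n` upsteps (semilength `n`). -/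
def IsDyckN (n : ℕ) (p : List Step) : Prop :=
  IsDyck p ∧ p.count U = n

/-- Length of the terminal descent (maximal final run of downsteps). -/
def termDesc (p : List Step) : ℕ :=
  (p.reverse.takeWhile (fun s => s == D)).length

/-- Number of returns: downsteps that bring the path back to ground level. -/
def returnCount (p : List Step) : ℕ :=
  ((List.range p.length).filter
    (fun i => (p.take (i+1)).count U == (p.take (i+1)).count D)).length

/-- `GroundDescent p q m r` : `p = q ++ D^m ++ r` is a maximal run of `m ≥ 1` downsteps
ending at ground level. -/
def GroundDescent (p q : List Step) (m : ℕ) (r : List Step) : Prop :=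
  p = q ++ List.replicate m D ++ r ∧ 1 ≤ m ∧
  q.getLast? ≠ some D ∧ r.head? ≠ some D ∧
  q.count U = q.count D + m

/-- All descents to ground level other than the terminal one have odd length. -/
def OddNonterminalGroundDescents (p : List Step) : Prop :=
  ∀ q m r, GroundDescent p q m r → r ≠ [] → Odd m

/-- No occurrence of `UD` starting at ground level. -/
def HillFree (p : List Step) : Prop :=
  ∀ q r : List Step, p = q ++ [U, D] ++ r → q.count U ≠ q.count D

/-- No occurrence of `UDU` starting at ground level. -/
def EarlyHillFree (p : List Step) : Prop :=
  ∀ q r : List Step, p = q ++ [U, D, U] ++ r → q.count U ≠ q.count D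

/-- Number of early hills: occurrences of `UDU` starting at ground level. -/
def earlyHillCount (p : List Step) : ℕ :=
  ((List.range p.length).filter
    (fun i => decide ((p.take i).count U = (p.take i).count D ∧
      (p.drop i).take 3 = [U, D, U]))).length

namespace Aux
open List

lemma step_cases (s : Step) : s = U ∨ s = D := by cases s <;> tauto

lemma count_U_add_count_D (l : List Step) : l.count U + l.count D = l.length := by
  induction l with
  | nil => simp
  | cons a t ih => rcases step_cases a with rfl | rfl <;>
      simp [List.count_cons, ← ih] <;> omega

lemma isDyck_nil : IsDyck ([] : List Step) := by
  constructor
  · simp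
  · intro q hq
    simp [List.prefix_nil.mp hq]

lemma prefix_cases {t a b : List Step} (h : t <+: a ++ b) :
    t <+: a ∨ ∃ s, s <+: b ∧ t = a ++ s := by
  obtain ⟨u, hu⟩ := h
  rcases List.append_eq_append_iff.mp hu with ⟨a', ha, _⟩ | ⟨c', hc, hd⟩
  · exact Or.inl ⟨a', ha.symm⟩
  · exact Or.inr ⟨c', ⟨u, hd.symm⟩, hc⟩

lemma isDyck_append {a b : List Step} (ha : IsDyck a) (hb : IsDyck b) : IsDyck (a ++ b) := by
  refine ⟨by simp [List.count_append, ha.1, hb.1], ?_⟩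
  intro t ht
  rcases prefix_cases ht with h | ⟨s, hs, rfl⟩
  · exact ha.2 t h
  · have h1 := hb.2 s hs
    have h2 := ha.2 a (List.prefix_refl a)
    simp only [List.count_append]
    omega

lemma isDyck_arch {q : List Step} (hq : IsDyck q) : IsDyck ([U] ++ q ++ [D]) := by
  constructor
  · simp [List.count_append, hq.1]
  · intro t ht
    rw [List.append_assoc] at ht
    rcases prefix_cases ht with h | ⟨s, hs, rfl⟩
    · have : t = [] ∨ t = [U] := by
        rcases h with ⟨u, hu⟩
        rcases t with _ | ⟨x, t'⟩
        · exact Or.inl rfl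
        · right
          simp only [List.cons_append, List.cons.injEq] at hu
          obtain ⟨rfl, hu2⟩ := hu
          simp [List.append_eq_nil_iff.mp hu2]
      rcases this with rfl | rfl <;> simp
    · rcases prefix_cases hs with h' | ⟨s', hs', rfl⟩
      · have := hq.2 s h'
        simp [List.count_append]; omega
      · have hs'' : s'.count D ≤ 1 := by
          calc s'.count D ≤ s'.length := List.count_le_length
          _ ≤ 1 := by simpa using hs'.length_le
        simp [List.count_append, hq.1]
        omega

end Aux

namespace Aux2
open List Aux

lemma cons_arch_eq (q r : List Step) : U :: q ++ D :: r = ([U] ++ q ++ [D]) ++ r := by simp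

lemma cons_arch_eq' (q r : List Step) : U :: q ++ D :: r = (U :: q ++ [D]) ++ r := by simp

lemma lastret_eq (q r : List Step) : q ++ U :: r ++ [D] = q ++ ([U] ++ r ++ [D]) := by simp

lemma isDyck_cons_arch {q r : List Step} (hq : IsDyck q) (hr : IsDyck r) :
    IsDyck (U :: q ++ D :: r) := by
  rw [cons_arch_eq]
  exact isDyck_append (isDyck_arch hq) hr

lemma isDyck_lastret {q r : List Step} (hq : IsDyck q) (hr : IsDyck r) :
    IsDyck (q ++ U :: r ++ [D]) := by
  rw [lastret_eq]
  exact isDyck_append hq (isDyck_arch hr)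

lemma head_eq_U {p : List Step} (hp : IsDyck p) (hne : p ≠ []) : ∃ t, p = U :: t := by
  rcases p with _ | ⟨a, t⟩
  · exact absurd rfl hne
  · rcases step_cases a with rfl | rfl
    · exact ⟨t, rfl⟩
    · have := hp.2 [D] ⟨t, rfl⟩
      simp at this

lemma count_U_pos {p : List Step} (hp : IsDyck p) (hne : p ≠ []) : 0 < p.count U := by
  obtain ⟨t, rfl⟩ := head_eq_U hp hne
  simp [List.count_cons]

lemma ne_nil_of_count_U_pos {p : List Step} (h : 0 < p.count U) : p ≠ [] := by
  rintro rfl; simp at h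

/-- suffix of a Dyck path has at least as many D's as U's -/
lemma suffix_count {a s : List Step} (hp : IsDyck (a ++ s)) : s.count U ≤ s.count D := by
  have h1 := hp.1
  have h2 := hp.2 a ⟨s, rfl⟩
  simp only [List.count_append] at h1
  omega

def sw : Step → Step
  | U => D
  | D => U

@[simp] lemma sw_U : sw U = D := rfl
@[simp] lemma sw_D : sw D = U := rfl

@[simp] lemma sw_sw (s : Step) : sw (sw s) = s := by cases s <;> rfl

def rc (l : List Step) : List Step := (l.map sw).reverse

@[simp] lemma rc_rc (l : List Step) : rc (rc l) = l := by
  simp [rc, ← List.map_reverse, List.map_map, Function.comp_def]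

@[simp] lemma rc_append (a b : List Step) : rc (a ++ b) = rc b ++ rc a := by
  simp [rc]

@[simp] lemma rc_nil : rc ([] : List Step) = [] := rfl
@[simp] lemma rc_singleton_U : rc [U] = [D] := rfl
@[simp] lemma rc_singleton_D : rc [D] = [U] := rfl

@[simp] lemma rc_count_U (l : List Step) : (rc l).count U = l.count D := by
  induction l with
  | nil => rfl
  | cons a t ih =>
    rcases step_cases a with rfl | rfl <;>
      simp [rc, List.count_cons, List.count_append] at ih ⊢ <;> omega

@[simp] lemma rc_count_D (l : List Step) : (rc l).count D = l.count U := by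
  have := rc_count_U (rc l)
  simpa using this.symm

lemma rc_injective : Function.Injective rc := by
  intro a b h
  have := congrArg rc h
  simpa using this

lemma isDyck_rc {p : List Step} (hp : IsDyck p) : IsDyck (rc p) := by
  constructor
  · simp [hp.1]
  · intro q hq
    obtain ⟨u, hu⟩ := hq
    have hp' : rc u ++ rc q = p := by
      have := congrArg rc hu
      simpa using this
    have : (rc q).count U ≤ (rc q).count D := suffix_count (hp' ▸ hp)
    simpa using this

lemma isDyck_rc_iff {p : List Step} : IsDyck (rc p) ↔ IsDyck p := by
  constructor
  · intro h
    have := isDyck_rc h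
    simpa using this
  · exact isDyck_rc

end Aux2

namespace Aux3
open List Aux Aux2

def toDW : Step → DyckStep
  | U => DyckStep.U
  | D => DyckStep.D

def ofDW : DyckStep → Step
  | DyckStep.U => U
  | DyckStep.D => D

@[simp] lemma ofDW_toDW (s : Step) : ofDW (toDW s) = s := by cases s <;> rfl
@[simp] lemma toDW_ofDW (s : DyckStep) : toDW (ofDW s) = s := by cases s <;> rfl

@[simp] lemma map_ofDW_toDW (l : List Step) : (l.map toDW).map ofDW = l := by
  simp [List.map_map, Function.comp_def]

@[simp] lemma map_toDW_ofDW (l : List DyckStep) : (l.map ofDW).map toDW = l := by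
  simp [List.map_map, Function.comp_def]

@[simp] lemma count_map_toDW_U (l : List Step) : (l.map toDW).count DyckStep.U = l.count U := by
  induction l with
  | nil => rfl
  | cons a t ih => rcases step_cases a with rfl | rfl <;> simp [List.count_cons, toDW, ih]

@[simp] lemma count_map_toDW_D (l : List Step) : (l.map toDW).count DyckStep.D = l.count D := by
  induction l with
  | nil => rfl
  | cons a t ih => rcases step_cases a with rfl | rfl <;> simp [List.count_cons, toDW, ih]

@[simp] lemma count_map_ofDW_U (l : List DyckStep) : (l.map ofDW).count U = l.count DyckStep.U := by
  induction l with
  | nil => rfl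
  | cons a t ih => rcases a.dichotomy with rfl | rfl <;> simp [List.count_cons, ofDW, ih]

@[simp] lemma count_map_ofDW_D (l : List DyckStep) : (l.map ofDW).count D = l.count DyckStep.D := by
  induction l with
  | nil => rfl
  | cons a t ih => rcases a.dichotomy with rfl | rfl <;> simp [List.count_cons, ofDW, ih]

lemma isDyck_ofDW (w : DyckWord) : IsDyck (w.toList.map ofDW) := by
  constructor
  · simp [w.count_U_eq_count_D]
  · intro q hq
    obtain ⟨i, hi⟩ : ∃ i, q = (w.toList.map ofDW).take i :=
      ⟨q.length, (List.prefix_iff_eq_take.mp hq)⟩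
    subst hi
    have h1 : ((w.toList.map ofDW).take i).count D = (w.toList.take i).count DyckStep.D := by
      rw [← List.map_take, count_map_ofDW_D]
    have h2 : ((w.toList.map ofDW).take i).count U = (w.toList.take i).count DyckStep.U := by
      rw [← List.map_take, count_map_ofDW_U]
    rw [h1, h2]
    exact w.count_D_le_count_U i

def toWord (p : List Step) (hp : IsDyck p) : DyckWord where
  toList := p.map toDW
  count_U_eq_count_D := by simp [hp.1]
  count_D_le_count_U i := by
    have h1 : ((p.map toDW).take i).count DyckStep.D = (p.take i).count D := by
      rw [← List.map_take, count_map_toDW_D]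
    have h2 : ((p.map toDW).take i).count DyckStep.U = (p.take i).count U := by
      rw [← List.map_take, count_map_toDW_U]
    rw [h1, h2]
    exact hp.2 (p.take i) (List.take_prefix i p)

@[simp] lemma toWord_toList (p : List Step) (hp : IsDyck p) : (toWord p hp).toList = p.map toDW :=
  rfl

lemma add_toList (a b : DyckWord) : (a + b).toList = a.toList ++ b.toList := rfl

lemma nest_toList (a : DyckWord) : a.nest.toList = [DyckStep.U] ++ a.toList ++ [DyckStep.D] := rfl

lemma rc_arch (q r : List Step) : rc (U :: q ++ D :: r) = rc r ++ U :: rc q ++ [D] := by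
  simp [rc]

lemma rc_lastret (q r : List Step) : rc (q ++ U :: r ++ [D]) = U :: rc r ++ D :: rc q := by
  simp [rc]

lemma arch_exists {p : List Step} (hp : IsDyck p) (hne : p ≠ []) :
    ∃ q r, IsDyck q ∧ IsDyck r ∧ p = U :: q ++ D :: r := by
  set w := toWord p hp with hw
  have hw0 : w ≠ 0 := by
    rw [← DyckWord.toList_ne_nil]
    simpa [hw] using hne
  have hdec := DyckWord.nest_insidePart_add_outsidePart hw0
  have hlist : ([DyckStep.U] ++ w.insidePart.toList ++ [DyckStep.D]) ++ w.outsidePart.toList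
      = p.map toDW := by
    rw [← nest_toList, ← add_toList, hdec]
    rfl
  refine ⟨w.insidePart.toList.map ofDW, w.outsidePart.toList.map ofDW,
    isDyck_ofDW _, isDyck_ofDW _, ?_⟩
  have h3 := congrArg (List.map ofDW) hlist
  simp only [List.map_append, map_ofDW_toDW] at h3
  rw [← h3]
  simp [ofDW]

lemma lastret_exists {p : List Step} (hp : IsDyck p) (hne : p ≠ []) :
    ∃ q r, IsDyck q ∧ IsDyck r ∧ p = q ++ U :: r ++ [D] := by
  obtain ⟨q1, r1, hq1, hr1, hd⟩ := arch_exists (isDyck_rc hp) (by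
    simp only [ne_eq, rc, List.reverse_eq_nil_iff, List.map_eq_nil_iff]; exact hne)
  refine ⟨rc r1, rc q1, isDyck_rc hr1, isDyck_rc hq1, ?_⟩
  have h2 : p = rc (U :: q1 ++ D :: r1) := by rw [← hd, rc_rc]
  rw [h2, rc_arch]

lemma arch_unique {q r q' r' : List Step} (hq : IsDyck q) (hq' : IsDyck q')
    (h : U :: q ++ D :: r = U :: q' ++ D :: r') : q = q' ∧ r = r' := by
  have key : ∀ a b : List Step, ∀ x y : List Step, IsDyck a → IsDyck b →
      a ++ D :: x = b ++ D :: y → a.length < b.length → False := by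
    intro a b x y ha hb heq hlt
    have hpre : a ++ [D] <+: b := by
      have h1 : a ++ [D] <+: b ++ D :: y := by
        rw [← heq]
        exact ⟨x, by simp⟩
      have h2 := List.prefix_iff_eq_take.mp h1
      rw [List.length_append, List.length_singleton] at h2
      rw [List.take_append_of_le_length (by omega)] at h2
      rw [h2]
      exact List.take_prefix _ _
    have hD := hb.2 _ hpre
    have hU := ha.1
    simp only [List.count_append, List.count_cons, List.count_nil] at hD
    simp at hD
    omega
  have htail : q ++ D :: r = q' ++ D :: r' := by simpa using h
  have hlen : q.length = q'.length := by
    by_contra hne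
    rcases Nat.lt_or_ge q.length q'.length with hlt | hge
    · exact key q q' r r' hq hq' htail hlt
    · exact key q' q r' r hq' hq htail.symm (by omega)
  obtain ⟨h1, h2⟩ := List.append_inj htail hlen
  exact ⟨h1, by simpa using h2⟩

lemma lastret_unique {q r q' r' : List Step} (hr : IsDyck r) (hr' : IsDyck r')
    (h : q ++ U :: r ++ [D] = q' ++ U :: r' ++ [D]) : q = q' ∧ r = r' := by
  have h2 : U :: rc r ++ D :: rc q = U :: rc r' ++ D :: rc q' := by
    have := congrArg rc h
    rwa [rc_lastret, rc_lastret] at this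
  obtain ⟨e1, e2⟩ := arch_unique (isDyck_rc hr) (isDyck_rc hr') h2
  exact ⟨rc_injective e2, rc_injective e1⟩

end Aux3

namespace Aux4
open List Aux Aux2 Aux3

lemma head_dropWhile_not {α} (q : α → Bool) : ∀ l : List α, ∀ a : α,
    (l.dropWhile q).head? = some a → q a = false
  | [], a => by simp
  | b :: t, a => by
    by_cases hb : q b
    · rw [List.dropWhile_cons_of_pos hb]
      exact head_dropWhile_not q t a
    · rw [List.dropWhile_cons_of_neg hb]
      intro h
      simp only [List.head?_cons, Option.some.injEq] at h
      subst h
      simpa using hb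

lemma termDesc_nil : termDesc ([] : List Step) = 0 := rfl

lemma termDesc_eq_of_getLast {x : List Step} (m : ℕ) (h : x.getLast? ≠ some D) :
    termDesc (x ++ List.replicate m D) = m := by
  unfold termDesc
  rw [List.reverse_append, List.reverse_replicate]
  rw [List.takeWhile_append_of_pos (by
    intro a ha
    simp [List.eq_of_mem_replicate ha])]
  have hx : x.reverse.takeWhile (fun s => s == D) = [] := by
    cases hxr : x.reverse with
    | nil => simp
    | cons a t =>
      have ha : x.getLast? = some a := by
        rw [← List.head?_reverse, hxr]; rfl
      have : a ≠ D := fun hh => h (hh ▸ ha)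
      rw [List.takeWhile_cons_of_neg (by simpa using this)]
  rw [hx]
  simp

lemma termDesc_decomp (p : List Step) :
    ∃ x, p = x ++ List.replicate (termDesc p) D ∧ x.getLast? ≠ some D := by
  refine ⟨(p.reverse.dropWhile (fun s => s == D)).reverse, ?_, ?_⟩
  · have h1 := List.takeWhile_append_dropWhile (p := fun s => s == D) (l := p.reverse)
    have h2 : p.reverse.takeWhile (fun s => s == D) = List.replicate (termDesc p) D := by
      rw [List.eq_replicate_iff]
      refine ⟨rfl, fun b hb => by simpa using List.mem_takeWhile_imp hb⟩
    have h3 := congrArg List.reverse h1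
    rw [List.reverse_append, List.reverse_reverse, h2, List.reverse_replicate] at h3
    exact h3.symm
  · rw [List.getLast?_reverse]
    intro hh
    have := head_dropWhile_not (fun s => s == D) p.reverse D hh
    simp at this

lemma getLast_cons_U_ne_D {x : List Step} (h : x.getLast? ≠ some D) :
    (U :: x).getLast? ≠ some D := by
  rcases x with _ | ⟨a, t⟩
  · simp
  · rw [show U :: a :: t = [U] ++ (a :: t) by rfl, List.getLast?_append_of_ne_nil _ (by simp)]
    exact h

lemma termDesc_arch {q : List Step} (hq : IsDyck q) :
    termDesc (U :: q ++ [D]) = termDesc q + 1 := by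
  obtain ⟨x, hx, hxl⟩ := termDesc_decomp q
  have he : U :: q ++ [D] = (U :: x) ++ List.replicate (termDesc q + 1) D := by
    conv_lhs => rw [hx]
    rw [List.replicate_succ']
    simp
  rw [he, termDesc_eq_of_getLast _ (getLast_cons_U_ne_D hxl)]

lemma termDesc_append_right {x r : List Step} (hr : IsDyck r) (hne : r ≠ []) :
    termDesc (x ++ r) = termDesc r := by
  obtain ⟨y, hy, hyl⟩ := termDesc_decomp r
  have hyne : y ≠ [] := by
    rintro rfl
    have h1 := count_U_pos hr hne
    rw [hy] at h1
    simp [List.count_replicate] at h1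
  have he : x ++ r = (x ++ y) ++ List.replicate (termDesc r) D := by
    conv_lhs => rw [hy]
    rw [List.append_assoc]
  rw [he, termDesc_eq_of_getLast _ (by
    rwa [List.getLast?_append_of_ne_nil _ hyne])]

lemma termDesc_lastret {q r : List Step} (hr : IsDyck r) :
    termDesc (q ++ U :: r ++ [D]) = termDesc r + 1 := by
  rw [show q ++ U :: r ++ [D] = q ++ (U :: r ++ [D]) by simp]
  rw [termDesc_append_right (isDyck_cons_arch hr isDyck_nil) (by simp)]
  exact termDesc_arch hr

lemma termDesc_arch_outside {q r : List Step} (hq : IsDyck q) (hr : IsDyck r) (hne : r ≠ []) :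
    termDesc (U :: q ++ D :: r) = termDesc r := by
  rw [cons_arch_eq]
  exact termDesc_append_right hr hne

end Aux4

namespace Aux5
open List Aux Aux2 Aux3 Aux4

lemma drop_replicate {α} (a : α) (n k : ℕ) :
    (List.replicate n a).drop k = List.replicate (n - k) a := by
  rw [List.eq_replicate_iff]
  constructor
  · simp
  · intro b hb
    exact List.eq_of_mem_replicate (List.mem_of_mem_drop hb)

lemma no_early_return {q r t rest : List Step} (hq : IsDyck q)
    (ht : t ++ rest = U :: q ++ D :: r) (hne : t ≠ []) (hbal : t.count U = t.count D) :
    q.length + 2 ≤ t.length := by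
  by_contra hlen
  push_neg at hlen
  rcases t with _ | ⟨a, t2⟩
  · exact hne rfl
  · have ha : a = U ∧ t2 ++ rest = q ++ D :: r := by
      have h1 : (a :: t2) ++ rest = U :: (q ++ D :: r) := by simpa using ht
      simp only [List.cons_append, List.cons.injEq] at h1
      exact h1
    obtain ⟨rfl, ht2⟩ := ha
    have hlen2 : t2.length ≤ q.length := by
      simp only [List.length_cons] at hlen
      omega
    have hpre : t2 <+: q := by
      have h2 : t2 = (q ++ D :: r).take t2.length := by
        rw [← ht2, List.take_append_of_le_length (le_refl _), List.take_length]
      rw [List.take_append_of_le_length hlen2] at h2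
      rw [h2]
      exact List.take_prefix _ _
    have hc2 : t2.count D ≤ t2.count U := hq.2 t2 hpre
    simp [List.count_cons] at hbal
    omega

lemma gd_classify {q r q' r' : List Step} {m : ℕ} (hq : IsDyck q) (hr : IsDyck r)
    (hgd : GroundDescent (U :: q ++ D :: r) q' m r') :
    (m = termDesc q + 1 ∧ r' = r) ∨
      ∃ q'', q' = (U :: q ++ [D]) ++ q'' ∧ GroundDescent r q'' m r' := by
  obtain ⟨he, hm, hlast, hhead, hcnt⟩ := hgd
  set t := q' ++ List.replicate m D with htdef
  have htbal : t.count U = t.count D := by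
    simp only [htdef, List.count_append, List.count_replicate]
    simp
    omega
  have htlen : t.length = q'.length + m := by simp [htdef]
  have htne : t ≠ [] := by
    apply List.ne_nil_of_length_pos
    omega
  have hteq : t ++ r' = U :: q ++ D :: r := he.symm
  have hL := no_early_return hq hteq htne htbal
  have harch_pref : (U :: q ++ [D]) <+: U :: q ++ D :: r := ⟨r, by simp⟩
  have harchlen : (U :: q ++ [D]).length = q.length + 2 := by simp
  rcases eq_or_lt_of_le hL with hEq | hLt
  · left
    have ht_pref : t <+: U :: q ++ D :: r := ⟨r', hteq⟩
    have hteq2 : t = U :: q ++ [D] := by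
      apply List.IsPrefix.eq_of_length
      · exact List.prefix_of_prefix_length_le ht_pref harch_pref (by omega)
      · omega
    have hr' : r' = r := by
      apply List.append_cancel_left (as := t)
      rw [hteq, hteq2, cons_arch_eq']
    have e1 : termDesc t = m := termDesc_eq_of_getLast m hlast
    have e2 : termDesc t = termDesc q + 1 := by rw [hteq2]; exact termDesc_arch hq
    exact ⟨by omega, hr'⟩
  · right
    have hq'len : q.length + 2 ≤ q'.length := by
      by_contra hc
      push_neg at hc
      set n := q.length + 2 with hn
      have hdrop : (U :: q ++ D :: r).drop n = r := by
        rw [cons_arch_eq', ← harchlen, List.drop_left]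
      have hql : q'.length ≤ n := by omega
      have hlen2 : n - (q' ++ List.replicate m D).length = 0 := by
        simp only [List.length_append, List.length_replicate]
        omega
      have hdrop2 : (U :: q ++ D :: r).drop n
          = List.replicate (m - (n - q'.length)) D ++ r' := by
        rw [he, List.drop_append, List.drop_append,
          List.drop_of_length_le hql, hlen2, List.drop_zero, drop_replicate]
        simp
      have hk : 1 ≤ m - (n - q'.length) := by omega
      rw [hdrop] at hdrop2
      obtain ⟨tr, htr⟩ := head_eq_U hr (by
        rw [hdrop2, show m - (n - q'.length) = (m - (n - q'.length) - 1) + 1 by omega,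
          List.replicate_succ]
        simp)
      rw [htr, show m - (n - q'.length) = (m - (n - q'.length) - 1) + 1 by omega,
        List.replicate_succ] at hdrop2
      simp at hdrop2
    obtain ⟨q'', hq''⟩ : (U :: q ++ [D]) <+: q' := by
      have hq'pre : q' <+: U :: q ++ D :: r := ⟨List.replicate m D ++ r', by
        rw [he, List.append_assoc]⟩
      exact List.prefix_of_prefix_length_le harch_pref hq'pre (by omega)
    have hq''ne : q'' ≠ [] := by
      rintro rfl
      rw [List.append_nil] at hq''
      apply hlast
      rw [← hq'', List.getLast?_append_of_ne_nil _ (by simp)]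
      rfl
    have hrdec : r = q'' ++ List.replicate m D ++ r' := by
      apply List.append_cancel_left (as := U :: q ++ [D])
      rw [← cons_arch_eq', he, htdef, ← hq'']
      simp [List.append_assoc]
    refine ⟨q'', hq''.symm, hrdec, hm, ?_, hhead, ?_⟩
    · rwa [← hq'', List.getLast?_append_of_ne_nil _ hq''ne] at hlast
    · rw [← hq''] at hcnt
      have hqc := hq.1
      simp [List.count_append, List.count_cons] at hcnt ⊢
      omega

lemma gd_arch {q r : List Step} (hq : IsDyck q) (hhr : r.head? ≠ some D) :
    ∃ q0, GroundDescent (U :: q ++ D :: r) q0 (termDesc q + 1) r := by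
  obtain ⟨x, hx, hxl⟩ := termDesc_decomp q
  refine ⟨U :: x, ?_, by omega, getLast_cons_U_ne_D hxl, hhr, ?_⟩
  · conv_lhs => rw [hx]
    rw [List.replicate_succ']
    simp [List.append_assoc]
  · have hqc := hq.1
    rw [hx] at hqc
    simp [List.count_append, List.count_cons, List.count_replicate] at hqc ⊢
    omega

lemma gd_lift {q r q'' m r'} (hq : IsDyck q) (hgd : GroundDescent r q'' m r') :
    GroundDescent (U :: q ++ D :: r) ((U :: q ++ [D]) ++ q'') m r' := by
  obtain ⟨he, hm, hlast, hhead, hcnt⟩ := hgd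
  have hq''ne : q'' ≠ [] := by
    rintro rfl
    simp at hcnt
    omega
  refine ⟨?_, hm, ?_, hhead, ?_⟩
  · rw [cons_arch_eq', he]
    simp [List.append_assoc]
  · rwa [List.getLast?_append_of_ne_nil _ hq''ne]
  · have hqc := hq.1
    simp [List.count_append, List.count_cons] at hcnt ⊢
    omega

end Aux5

namespace Aux6
open List Aux Aux2 Aux3 Aux4 Aux5

def GoodCond (p : List Step) : Prop :=
  Even (termDesc p) ∧ OddNonterminalGroundDescents p

lemma good_arch_nil {q : List Step} (hq : IsDyck q) :
    GoodCond (U :: q ++ D :: ([] : List Step)) ↔ Odd (termDesc q) := by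
  constructor
  · rintro ⟨he, -⟩
    rw [termDesc_arch hq] at he
    rcases he with ⟨k, hk⟩
    exact ⟨k - 1, by omega⟩
  · intro ho
    constructor
    · rw [termDesc_arch hq]
      rcases ho with ⟨k, hk⟩
      exact ⟨k + 1, by omega⟩
    · intro q' m r' hgd hne
      rcases gd_classify hq isDyck_nil hgd with ⟨hm, rfl⟩ | ⟨q'', _, hgd'⟩
      · exact absurd rfl hne
      · obtain ⟨he, hm, -, -, -⟩ := hgd'
        have := congrArg List.length he
        simp at this
        omega

lemma good_arch_cons {q r : List Step} (hq : IsDyck q) (hr : IsDyck r) (hne : r ≠ []) :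
    GoodCond (U :: q ++ D :: r) ↔ Even (termDesc q) ∧ GoodCond r := by
  constructor
  · rintro ⟨he, hogd⟩
    have h1 : Even (termDesc r) := by
      rwa [termDesc_arch_outside hq hr hne] at he
    have hhr : r.head? ≠ some D := by
      obtain ⟨t, rfl⟩ := head_eq_U hr hne
      simp
    obtain ⟨q0, hq0⟩ := gd_arch (r := r) hq hhr
    have hodd := hogd _ _ _ hq0 hne
    have heq : Even (termDesc q) := by
      rcases hodd with ⟨k, hk⟩
      exact ⟨k, by omega⟩
    refine ⟨heq, h1, ?_⟩
    intro a m b hgd hbne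
    exact hogd _ _ _ (gd_lift hq hgd) hbne
  · rintro ⟨heq, her, hogd⟩
    constructor
    · rwa [termDesc_arch_outside hq hr hne]
    · intro q' m r' hgd hrne
      rcases gd_classify hq hr hgd with ⟨hm, rfl⟩ | ⟨q'', -, hgd'⟩
      · rw [hm]
        rcases heq with ⟨k, hk⟩
        exact ⟨k, by omega⟩
      · exact hogd _ _ _ hgd' hrne

end Aux6

namespace Aux7
open List Aux Aux2 Aux3 Aux4 Aux5 Aux6 Finset

instance : Fintype Step := ⟨{U, D}, fun x => by cases x <;> simp⟩

noncomputable def allW (k : ℕ) : Finset (List Step) :=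
  Finset.univ.image (fun f : Fin k → Step => List.ofFn f)

@[simp] lemma comp_ofDW_toDW : ofDW ∘ toDW = id := funext ofDW_toDW
@[simp] lemma comp_toDW_ofDW : toDW ∘ ofDW = id := funext toDW_ofDW

lemma mem_allW {k : ℕ} {l : List Step} : l ∈ allW k ↔ l.length = k := by
  simp only [allW, Finset.mem_image, Finset.mem_univ, true_and]
  constructor
  · rintro ⟨f, rfl⟩
    simp
  · intro h
    subst h
    exact ⟨l.get, List.ofFn_get l⟩

open Classical in
noncomputable def dyF (m : ℕ) : Finset (List Step) :=
  (allW (2*m)).filter (fun p => IsDyck p)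

open Classical in
noncomputable def evF (m : ℕ) : Finset (List Step) :=
  (dyF m).filter (fun p => Even (termDesc p))

open Classical in
noncomputable def odF (m : ℕ) : Finset (List Step) :=
  (dyF m).filter (fun p => Odd (termDesc p))

open Classical in
noncomputable def goF (m : ℕ) : Finset (List Step) :=
  (dyF m).filter (fun p => GoodCond p)

lemma mem_dyF {m : ℕ} {p : List Step} : p ∈ dyF m ↔ IsDyck p ∧ p.count U = m := by
  classical
  simp only [dyF, Finset.mem_filter, mem_allW]
  constructor
  · rintro ⟨hl, hd⟩
    refine ⟨hd, ?_⟩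
    have h1 := count_U_add_count_D p
    have h2 := hd.1
    omega
  · rintro ⟨hd, hc⟩
    refine ⟨?_, hd⟩
    have h1 := count_U_add_count_D p
    have h2 := hd.1
    omega

lemma mem_evF {m : ℕ} {p : List Step} :
    p ∈ evF m ↔ (IsDyck p ∧ p.count U = m) ∧ Even (termDesc p) := by
  classical
  simp [evF, Finset.mem_filter, mem_dyF]

lemma mem_odF {m : ℕ} {p : List Step} :
    p ∈ odF m ↔ (IsDyck p ∧ p.count U = m) ∧ Odd (termDesc p) := by
  classical
  simp [odF, Finset.mem_filter, mem_dyF]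

lemma mem_goF {m : ℕ} {p : List Step} :
    p ∈ goF m ↔ (IsDyck p ∧ p.count U = m) ∧ GoodCond p := by
  classical
  simp [goF, Finset.mem_filter, mem_dyF]

lemma dyF_zero : dyF 0 = {([] : List Step)} := by
  ext p
  simp only [mem_dyF, Finset.mem_singleton]
  constructor
  · rintro ⟨hd, hc⟩
    have h1 := count_U_add_count_D p
    have h2 := hd.1
    have : p.length = 0 := by omega
    exact List.eq_nil_of_length_eq_zero this
  · rintro rfl
    exact ⟨isDyck_nil, rfl⟩

lemma card_evF_zero : (evF 0).card = 1 := by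
  classical
  have : evF 0 = {([] : List Step)} := by
    rw [evF, dyF_zero]
    ext p
    simp only [Finset.mem_filter, Finset.mem_singleton]
    constructor
    · tauto
    · rintro rfl
      exact ⟨rfl, ⟨0, rfl⟩⟩
  rw [this]
  rfl

lemma card_odF_zero : (odF 0).card = 0 := by
  classical
  have : odF 0 = ∅ := by
    rw [odF, dyF_zero]
    ext p
    simp only [Finset.mem_filter, Finset.mem_singleton, Finset.notMem_empty, iff_false]
    rintro ⟨rfl, h⟩
    simp [termDesc_nil] at h
  rw [this]
  rfl

noncomputable def dyFEquiv (m : ℕ) : {p // p ∈ dyF m} ≃ {w : DyckWord // w.semilength = m} where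
  toFun x := ⟨toWord x.1 (mem_dyF.mp x.2).1, by
    have := (mem_dyF.mp x.2).2
    simp only [DyckWord.semilength, toWord]
    rw [count_map_toDW_U]
    exact this⟩
  invFun w := ⟨w.1.toList.map ofDW, mem_dyF.mpr ⟨isDyck_ofDW _, by
    rw [count_map_ofDW_U]
    exact w.2⟩⟩
  left_inv x := Subtype.ext (by simp [toWord])
  right_inv w := Subtype.ext (DyckWord.ext (by simp [toWord]))

lemma card_dyF (m : ℕ) : (dyF m).card = catalan m := by
  rw [← DyckWord.card_dyckWord_semilength_eq_catalan, ← Fintype.card_coe (dyF m)]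
  exact Fintype.card_congr (dyFEquiv m)

lemma count_lastret_U (q r : List Step) :
    (q ++ U :: r ++ [D]).count U = q.count U + r.count U + 1 := by
  simp [List.count_append, List.count_cons]
  omega

lemma count_arch_U (q r : List Step) :
    (U :: q ++ D :: r).count U = q.count U + r.count U + 1 := by
  simp [List.count_append, List.count_cons]

end Aux7

namespace Aux8
open List Aux Aux2 Aux3 Aux4 Aux5 Aux6 Aux7 Finset

lemma even_succ_iff_odd {t : ℕ} : Even (t + 1) ↔ Odd t := by
  rw [Nat.even_add_one, Nat.not_even_iff_odd]

lemma odd_succ_iff_even {t : ℕ} : Odd (t + 1) ↔ Even t := by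
  rw [Nat.odd_add_one]
  exact Nat.not_odd_iff_even

lemma card_evF_succ (k : ℕ) :
    (evF (k + 1)).card = ∑ j ∈ Finset.range (k + 1), catalan j * (odF (k - j)).card := by
  classical
  have hcs : ((Finset.range (k + 1)).sigma fun j => (dyF j) ×ˢ (odF (k - j))).card
      = ∑ j ∈ Finset.range (k + 1), catalan j * (odF (k - j)).card := by
    rw [Finset.card_sigma]
    exact Finset.sum_congr rfl fun j _ => by rw [Finset.card_product, card_dyF]
  rw [← hcs]
  symm
  apply Finset.card_bij (fun x _ => x.2.1 ++ U :: x.2.2 ++ [D])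
  · rintro ⟨j, q, r⟩ hx
    dsimp only
    simp only [Finset.mem_sigma, Finset.mem_range, Finset.mem_product] at hx
    obtain ⟨hj, hq, hr⟩ := hx
    obtain ⟨hqd, hqc⟩ := mem_dyF.mp hq
    obtain ⟨⟨hrd, hrc⟩, hro⟩ := mem_odF.mp hr
    rw [mem_evF]
    refine ⟨⟨isDyck_lastret hqd hrd, ?_⟩, ?_⟩
    · rw [count_lastret_U]; omega
    · rw [termDesc_lastret hrd]; exact even_succ_iff_odd.mpr hro
  · rintro ⟨j, q, r⟩ ha ⟨j', q', r'⟩ hb h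
    dsimp only at h
    simp only [Finset.mem_sigma, Finset.mem_range, Finset.mem_product] at ha hb
    obtain ⟨e1, e2⟩ := lastret_unique (mem_odF.mp ha.2.2).1.1 (mem_odF.mp hb.2.2).1.1 h
    have hj : j = j' := by
      have c1 := (mem_dyF.mp ha.2.1).2
      have c2 := (mem_dyF.mp hb.2.1).2
      rw [e1] at c1
      omega
    subst hj; subst e1; subst e2; rfl
  · intro p hp
    obtain ⟨⟨hpd, hpc⟩, hpe⟩ := mem_evF.mp hp
    have hne : p ≠ [] := ne_nil_of_count_U_pos (by omega)
    obtain ⟨q, r, hqd, hrd, hdec⟩ := lastret_exists hpd hne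
    have hcnt : q.count U + r.count U + 1 = k + 1 := by
      rw [hdec, count_lastret_U] at hpc
      omega
    refine ⟨⟨q.count U, q, r⟩, ?_, hdec.symm⟩
    simp only [Finset.mem_sigma, Finset.mem_range, Finset.mem_product]
    refine ⟨by omega, mem_dyF.mpr ⟨hqd, rfl⟩, mem_odF.mpr ⟨⟨hrd, by omega⟩, ?_⟩⟩
    rw [hdec, termDesc_lastret hrd] at hpe
    exact even_succ_iff_odd.mp hpe

lemma card_odF_succ (k : ℕ) :
    (odF (k + 1)).card = ∑ j ∈ Finset.range (k + 1), catalan j * (evF (k - j)).card := by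
  classical
  have hcs : ((Finset.range (k + 1)).sigma fun j => (dyF j) ×ˢ (evF (k - j))).card
      = ∑ j ∈ Finset.range (k + 1), catalan j * (evF (k - j)).card := by
    rw [Finset.card_sigma]
    exact Finset.sum_congr rfl fun j _ => by rw [Finset.card_product, card_dyF]
  rw [← hcs]
  symm
  apply Finset.card_bij (fun x _ => x.2.1 ++ U :: x.2.2 ++ [D])
  · rintro ⟨j, q, r⟩ hx
    dsimp only
    simp only [Finset.mem_sigma, Finset.mem_range, Finset.mem_product] at hx
    obtain ⟨hj, hq, hr⟩ := hx
    obtain ⟨hqd, hqc⟩ := mem_dyF.mp hq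
    obtain ⟨⟨hrd, hrc⟩, hro⟩ := mem_evF.mp hr
    rw [mem_odF]
    refine ⟨⟨isDyck_lastret hqd hrd, ?_⟩, ?_⟩
    · rw [count_lastret_U]; omega
    · rw [termDesc_lastret hrd]; exact odd_succ_iff_even.mpr hro
  · rintro ⟨j, q, r⟩ ha ⟨j', q', r'⟩ hb h
    dsimp only at h
    simp only [Finset.mem_sigma, Finset.mem_range, Finset.mem_product] at ha hb
    obtain ⟨e1, e2⟩ := lastret_unique (mem_evF.mp ha.2.2).1.1 (mem_evF.mp hb.2.2).1.1 h
    have hj : j = j' := by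
      have c1 := (mem_dyF.mp ha.2.1).2
      have c2 := (mem_dyF.mp hb.2.1).2
      rw [e1] at c1
      omega
    subst hj; subst e1; subst e2; rfl
  · intro p hp
    obtain ⟨⟨hpd, hpc⟩, hpe⟩ := mem_odF.mp hp
    have hne : p ≠ [] := ne_nil_of_count_U_pos (by omega)
    obtain ⟨q, r, hqd, hrd, hdec⟩ := lastret_exists hpd hne
    have hcnt : q.count U + r.count U + 1 = k + 1 := by
      rw [hdec, count_lastret_U] at hpc
      omega
    refine ⟨⟨q.count U, q, r⟩, ?_, hdec.symm⟩
    simp only [Finset.mem_sigma, Finset.mem_range, Finset.mem_product]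
    refine ⟨by omega, mem_dyF.mpr ⟨hqd, rfl⟩, mem_evF.mpr ⟨⟨hrd, by omega⟩, ?_⟩⟩
    rw [hdec, termDesc_lastret hrd] at hpe
    exact odd_succ_iff_even.mp hpe

lemma card_goF_succ (k : ℕ) :
    (goF (k + 1)).card = (odF k).card
      + ∑ j ∈ Finset.range k, (evF j).card * (goF (k - j)).card := by
  classical
  have hcs : ((odF k).disjSum ((Finset.range k).sigma fun j => (evF j) ×ˢ (goF (k - j)))).card
      = (odF k).card + ∑ j ∈ Finset.range k, (evF j).card * (goF (k - j)).card := by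
    rw [Finset.card_disjSum, Finset.card_sigma]
    congr 1
    exact Finset.sum_congr rfl fun j _ => Finset.card_product _ _
  rw [← hcs]
  symm
  apply Finset.card_bij (fun x _ => Sum.elim (fun q => U :: q ++ D :: ([] : List Step))
    (fun y => U :: y.2.1 ++ D :: y.2.2) x)
  · rintro (q | ⟨j, q, r⟩) hx
    · rw [Finset.inl_mem_disjSum] at hx
      obtain ⟨⟨hqd, hqc⟩, hqo⟩ := mem_odF.mp hx
      rw [Sum.elim_inl, mem_goF]
      refine ⟨⟨isDyck_cons_arch hqd isDyck_nil, ?_⟩, (good_arch_nil hqd).mpr hqo⟩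
      rw [count_arch_U]
      simp
      omega
    · rw [Finset.inr_mem_disjSum] at hx
      simp only [Finset.mem_sigma, Finset.mem_range, Finset.mem_product] at hx
      obtain ⟨hj, hq, hr⟩ := hx
      obtain ⟨⟨hqd, hqc⟩, hqe⟩ := mem_evF.mp hq
      obtain ⟨⟨hrd, hrc⟩, hrg⟩ := mem_goF.mp hr
      have hrne : r ≠ [] := ne_nil_of_count_U_pos (by omega)
      rw [Sum.elim_inr]
      dsimp only
      rw [mem_goF]
      refine ⟨⟨isDyck_cons_arch hqd hrd, ?_⟩, (good_arch_cons hqd hrd hrne).mpr ⟨hqe, hrg⟩⟩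
      rw [count_arch_U]
      omega
  · rintro (q | ⟨j, q, r⟩) ha (q' | ⟨j', q', r'⟩) hb h
    · rw [Finset.inl_mem_disjSum] at ha hb
      simp only [Sum.elim_inl] at h
      obtain ⟨e1, -⟩ := arch_unique (mem_odF.mp ha).1.1 (mem_odF.mp hb).1.1 h
      rw [e1]
    · rw [Finset.inl_mem_disjSum] at ha
      rw [Finset.inr_mem_disjSum] at hb
      simp only [Finset.mem_sigma, Finset.mem_range, Finset.mem_product] at hb
      simp only [Sum.elim_inl, Sum.elim_inr] at h
      obtain ⟨-, e2⟩ := arch_unique (mem_odF.mp ha).1.1 (mem_evF.mp hb.2.1).1.1 h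
      obtain ⟨⟨hrd, hrc⟩, -⟩ := mem_goF.mp hb.2.2
      have : r' ≠ [] := ne_nil_of_count_U_pos (by
        have := hb.1
        omega)
      exact absurd e2.symm this
    · rw [Finset.inr_mem_disjSum] at ha
      rw [Finset.inl_mem_disjSum] at hb
      simp only [Finset.mem_sigma, Finset.mem_range, Finset.mem_product] at ha
      simp only [Sum.elim_inl, Sum.elim_inr] at h
      obtain ⟨-, e2⟩ := arch_unique (mem_evF.mp ha.2.1).1.1 (mem_odF.mp hb).1.1 h
      obtain ⟨⟨hrd, hrc⟩, -⟩ := mem_goF.mp ha.2.2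
      have : r ≠ [] := ne_nil_of_count_U_pos (by
        have := ha.1
        omega)
      exact absurd e2 this
    · rw [Finset.inr_mem_disjSum] at ha hb
      simp only [Finset.mem_sigma, Finset.mem_range, Finset.mem_product] at ha hb
      simp only [Sum.elim_inr] at h
      obtain ⟨e1, e2⟩ := arch_unique (mem_evF.mp ha.2.1).1.1 (mem_evF.mp hb.2.1).1.1 h
      have hj : j = j' := by
        have c1 := (mem_evF.mp ha.2.1).1.2
        have c2 := (mem_evF.mp hb.2.1).1.2
        rw [e1] at c1
        omega
      subst hj; subst e1; subst e2; rfl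
  · intro p hp
    obtain ⟨⟨hpd, hpc⟩, hpg⟩ := mem_goF.mp hp
    have hne : p ≠ [] := ne_nil_of_count_U_pos (by omega)
    obtain ⟨q, r, hqd, hrd, hdec⟩ := arch_exists hpd hne
    have hcnt : q.count U + r.count U + 1 = k + 1 := by
      rw [hdec, count_arch_U] at hpc
      omega
    rcases eq_or_ne r [] with rfl | hrne
    · refine ⟨Sum.inl q, ?_, ?_⟩
      · rw [Finset.inl_mem_disjSum, mem_odF]
        have hqc : q.count U = k := by
          simp only [List.count_nil] at hcnt
          omega
        rw [hdec] at hpg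
        exact ⟨⟨hqd, hqc⟩, (good_arch_nil hqd).mp hpg⟩
      · rw [Sum.elim_inl, hdec]
    · refine ⟨Sum.inr ⟨q.count U, q, r⟩, ?_, ?_⟩
      · rw [Finset.inr_mem_disjSum]
        simp only [Finset.mem_sigma, Finset.mem_range, Finset.mem_product]
        have hrpos : 0 < r.count U := count_U_pos hrd hrne
        rw [hdec] at hpg
        obtain ⟨hqe, hrg⟩ := (good_arch_cons hqd hrd hrne).mp hpg
        exact ⟨by omega, mem_evF.mpr ⟨⟨hqd, rfl⟩, hqe⟩,
          mem_goF.mpr ⟨⟨hrd, by omega⟩, hrg⟩⟩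
      · rw [Sum.elim_inr, hdec]

end Aux8

namespace Aux9
open List Aux Aux2 Aux3 Aux4 Aux5 Aux6 Aux7 Aux8 Finset

lemma eo_eq (m : ℕ) : (evF m).card + (odF m).card = catalan m := by
  classical
  rw [← card_dyF m]
  have h2 : odF m = (dyF m).filter (fun p => ¬ Even (termDesc p)) := by
    rw [odF]
    apply Finset.filter_congr
    intro x _
    simp [Nat.not_even_iff_odd]
  rw [evF, h2]
  exact Finset.card_filter_add_card_filter_not _

lemma K_lemma : ∀ k, (odF (k + 1)).card = (evF (k + 1)).card + (evF k).card := by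
  intro k
  induction k using Nat.strong_induction_on with
  | _ k IH =>
  rcases Nat.eq_zero_or_pos k with rfl | hk
  · rw [card_odF_succ, card_evF_succ]
    simp [card_evF_zero, card_odF_zero]
  · obtain ⟨k', rfl⟩ : ∃ k', k = k' + 1 := ⟨k - 1, by omega⟩
    show (odF (k' + 2)).card = (evF (k' + 2)).card + (evF (k' + 1)).card
    have ho : (odF (k' + 2)).card
        = (∑ j ∈ range (k' + 1), catalan j * (evF (k' + 1 - j)).card) + catalan (k' + 1) := by
      rw [show k' + 2 = (k' + 1) + 1 by omega, card_odF_succ, Finset.sum_range_succ,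
        show k' + 1 - (k' + 1) = 0 by omega, card_evF_zero, Nat.mul_one]
    have he : (evF (k' + 2)).card
        = (∑ j ∈ range (k' + 1), catalan j * (evF (k' + 1 - j)).card)
          + (odF (k' + 1)).card := by
      rw [show k' + 2 = (k' + 1) + 1 by omega, card_evF_succ, Finset.sum_range_succ,
        show k' + 1 - (k' + 1) = 0 by omega, card_odF_zero, Nat.mul_zero, Nat.add_zero]
      have hsplit : ∑ j ∈ range (k' + 1), catalan j * (odF (k' + 1 - j)).card
          = ∑ j ∈ range (k' + 1),
              (catalan j * (evF (k' + 1 - j)).card + catalan j * (evF (k' - j)).card) := by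
        apply Finset.sum_congr rfl
        intro j hj
        rw [Finset.mem_range] at hj
        rw [show k' + 1 - j = (k' - j) + 1 by omega, IH (k' - j) (by omega), Nat.mul_add]
      rw [hsplit, Finset.sum_add_distrib, ← card_odF_succ k']
    have hc := eo_eq (k' + 1)
    omega

lemma I_aux (k : ℕ) :
    ∑ j ∈ range (k + 1), (evF j).card * catalan (k - j) = (odF (k + 1)).card := by
  rw [card_odF_succ]
  conv_rhs => rw [← Finset.sum_range_reflect]
  apply Finset.sum_congr rfl
  intro j hj
  rw [Finset.mem_range] at hj
  rw [show k + 1 - 1 - j = k - j by omega, show k - (k - j) = j by omega, Nat.mul_comm]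

lemma I_main (k : ℕ) :
    catalan (k + 1) = (odF (k + 1)).card + ∑ j ∈ range k, (evF j).card * catalan (k - j) := by
  have h1 : ∑ j ∈ range (k + 1), (evF j).card * catalan (k - j)
      = ∑ j ∈ range k, (evF j).card * catalan (k - j) + (evF k).card := by
    rw [Finset.sum_range_succ, show k - k = 0 by omega, catalan_zero, Nat.mul_one]
  have h2 := I_aux k
  have h3 := K_lemma k
  have h4 := eo_eq (k + 1)
  omega

lemma card_goF_one : (goF 1).card = 0 := by
  have h := card_goF_succ 0
  simpa [card_odF_zero] using h

lemma card_goF_eq (k : ℕ) : (goF (k + 2)).card = catalan (k + 1) := by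
  induction k using Nat.strong_induction_on with
  | _ k IH =>
  rw [show k + 2 = (k + 1) + 1 by omega, card_goF_succ (k + 1)]
  have hsum : ∑ j ∈ range (k + 1), (evF j).card * (goF (k + 1 - j)).card
      = ∑ j ∈ range k, (evF j).card * catalan (k - j) := by
    rw [Finset.sum_range_succ, show k + 1 - k = 1 by omega, card_goF_one,
      Nat.mul_zero, Nat.add_zero]
    apply Finset.sum_congr rfl
    intro j hj
    rw [Finset.mem_range] at hj
    rw [show k + 1 - j = (k - 1 - j) + 2 by omega, IH (k - 1 - j) (by omega),
      show (k - 1 - j) + 1 = k - j by omega]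
  rw [hsum]
  exact (I_main k).symm

end Aux9


/-- For `n ≥ 2`, the number of Dyck `n`-paths whose terminal descent has even length and all
of whose other descents to ground level have odd length equals the Catalan number `C_{n-1}`. -/
theorem stmt0 (n : ℕ) (hn : 2 ≤ n) :
    Nat.card {p : List Step // IsDyckN n p ∧ Even (termDesc p) ∧
      OddNonterminalGroundDescents p} = catalan (n - 1) := by
  classical
  have h1 : Nat.card {p : List Step // IsDyckN n p ∧ Even (termDesc p) ∧
      OddNonterminalGroundDescents p} = (Aux7.goF n).card := by
    rw [← Nat.card_eq_finsetCard]
    apply Nat.card_congr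
    apply Equiv.subtypeEquivRight
    intro p
    rw [Aux7.mem_goF]
    unfold IsDyckN Aux6.GoodCond
    tauto
  rw [h1]
  obtain ⟨k, rfl⟩ : ∃ k, n = k + 2 := ⟨n - 2, by omega⟩
  rw [Aux9.card_goF_eq k]
  congr 1
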